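/- Suppose M > L_g‖L_p‖. If x̄, x⁺ ∈ C satisfy s_M(x⁺; x̄) ≤ s_M(x̄; x̄), then f(x⁺) ≤ f(x̄) − ((M − L_g‖L_p‖)/(p+1)!) ‖x⁺ − x̄‖^{p+1}. In particular, along any RHOTA sequence (x_k), the values f(x_k) are nonincreasing and f(x_{k+1}) ≤ f(x_k) − ((M − L_g‖L_p‖)/(p+1)!) ‖x_{k+1} − x_k‖^{p+1} for all k ≥ 0. -/

import Mathlib

open scoped BigOperators RealInnerProductSpace

noncomputable section

/-- The vector `(F_1(x), …, F_m(x)) ∈ ℝ^m` (with the Euclidean norm). -/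
def euclMap {n m : ℕ} (F : Fin m → EuclideanSpace ℝ (Fin n) → ℝ)
    (x : EuclideanSpace ℝ (Fin n)) : EuclideanSpace ℝ (Fin m) :=
  (EuclideanSpace.equiv (Fin m) ℝ).symm fun i => F i x

/-- The vector `T_p^F(y; x)` of `p`-th order Taylor approximations of the components
`F_i` around the center `x`, evaluated at `y`. -/
def taylorMap (p : ℕ) {n m : ℕ} (F : Fin m → EuclideanSpace ℝ (Fin n) → ℝ)
    (y x : EuclideanSpace ℝ (Fin n)) : EuclideanSpace ℝ (Fin m) :=
  (EuclideanSpace.equiv (Fin m) ℝ).symm fun i =>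
    ∑ j ∈ Finset.range (p + 1),
      (1 / (Nat.factorial j : ℝ)) * iteratedFDeriv ℝ j (F i) x (fun _ => y - x)

/-- The composite objective `f(x) = g(F(x)) + h(x)`. -/
def fObj {n m : ℕ} (F : Fin m → EuclideanSpace ℝ (Fin n) → ℝ)
    (g : EuclideanSpace ℝ (Fin m) → ℝ) (h : EuclideanSpace ℝ (Fin n) → ℝ)
    (x : EuclideanSpace ℝ (Fin n)) : ℝ :=
  g (euclMap F x) + h x

/-- The regularized higher-order Taylor model
`s_M(y; x̄) = g(T_p^F(y; x̄)) + (M/(p+1)!)‖y − x̄‖^{p+1} + h(y)`. -/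
def sModel (p : ℕ) {n m : ℕ} (F : Fin m → EuclideanSpace ℝ (Fin n) → ℝ)
    (g : EuclideanSpace ℝ (Fin m) → ℝ) (h : EuclideanSpace ℝ (Fin n) → ℝ) (M : ℝ)
    (y xb : EuclideanSpace ℝ (Fin n)) : ℝ :=
  g (taylorMap p F y xb) + M / (Nat.factorial (p + 1) : ℝ) * ‖y - xb‖ ^ (p + 1) + h y

section RhotaAux
variable {E : Type*} [NormedAddCommGroup E] [NormedSpace ℝ E]

/-- Auxiliary: `t ↦ D^j f(x+tv)[v,…,v]`. -/
def rhotaPsi (f : E → ℝ) (x v : E) (j : ℕ) (t : ℝ) : ℝ :=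
  iteratedFDeriv ℝ j f (x + t • v) (fun _ => v)

lemma rhotaPsi_hasDerivAt {q : ℕ} {f : E → ℝ} (hf : ContDiff ℝ (q+1) f) (x v : E)
    {j : ℕ} (hj : j < q + 1) (t : ℝ) :
    HasDerivAt (rhotaPsi f x v j) (rhotaPsi f x v (j+1) t) t := by
  have hdiff : Differentiable ℝ (iteratedFDeriv ℝ j f) :=
    hf.differentiable_iteratedFDeriv (by exact_mod_cast hj)
  have hc : HasDerivAt (fun t : ℝ => x + t • v) v t := by
    simpa using ((hasDerivAt_id t).smul_const v).const_add x
  have h1 : HasDerivAt (fun t : ℝ => iteratedFDeriv ℝ j f (x + t • v))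
      (fderiv ℝ (iteratedFDeriv ℝ j f) (x + t • v) v) t :=
    (hdiff (x + t • v)).hasFDerivAt.comp_hasDerivAt t hc
  have h2 := (ContinuousMultilinearMap.apply ℝ (fun _ : Fin j => E) ℝ
      (fun _ => v)).hasFDerivAt.comp_hasDerivAt t h1
  have h3 : rhotaPsi f x v (j+1) t
      = (fderiv ℝ (iteratedFDeriv ℝ j f) (x + t • v) v) (fun _ => v) := by
    rw [rhotaPsi, iteratedFDeriv_succ_apply_left]
    congr 1
  rw [h3]
  exact h2

lemma rhota_mono_aux {w w' : ℝ → ℝ} (hw : ∀ t, HasDerivAt w (w' t) t)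
    (h0 : ∀ t ∈ Set.Icc (0:ℝ) 1, 0 ≤ w' t) : w 0 ≤ w 1 := by
  have hm : MonotoneOn w (Set.Icc 0 1) := by
    apply monotoneOn_of_deriv_nonneg (convex_Icc 0 1)
    · exact fun t _ => (hw t).continuousAt.continuousWithinAt
    · intro t _
      exact (hw t).differentiableAt.differentiableWithinAt
    · intro t ht
      rw [(hw t).deriv]
      rw [interior_Icc] at ht
      exact h0 t (Set.Ioo_subset_Icc_self ht)
  exact hm (Set.left_mem_Icc.mpr zero_le_one) (Set.right_mem_Icc.mpr zero_le_one) zero_le_one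

/-- Taylor remainder bound for a scalar function whose `(q+1)`-st derivative is
`L`-Lipschitz. -/
lemma rhota_taylor_bound {q : ℕ} {f : E → ℝ} {L : ℝ}
    (hf : ContDiff ℝ (q+1) f)
    (hlip : ∀ a b : E, ‖iteratedFDeriv ℝ (q+1) f a - iteratedFDeriv ℝ (q+1) f b‖ ≤ L * ‖a - b‖)
    (x y : E) :
    |f y - ∑ j ∈ Finset.range (q+2),
        (1/(j.factorial:ℝ)) * iteratedFDeriv ℝ j f x (fun _ => y - x)|
      ≤ L / ((q+2).factorial : ℝ) * ‖y - x‖ ^ (q+2) := by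
  set v := y - x with hv
  set ψ : ℕ → ℝ → ℝ := rhotaPsi f x v with hψ
  set b : ℕ → ℝ → ℝ := fun j t => (j:ℝ) * (1-t)^(j-1) / (j.factorial:ℝ) * ψ j t with hb
  set G : ℝ → ℝ := fun t => (∑ j ∈ Finset.range (q+1), (1-t)^j / (j.factorial:ℝ) * ψ j t)
      + (1-t)^(q+1) / ((q+1).factorial:ℝ) * ψ (q+1) 0 with hG
  set c : ℝ := L * ‖v‖^(q+2) / (q.factorial:ℝ) with hc
  set B : ℝ → ℝ := fun t => c * (-((1-t)^(q+1) * t)/((q:ℝ)+1)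
      - (1-t)^(q+2)/(((q:ℝ)+1)*((q:ℝ)+2))) with hB
  have hfac0 : ∀ k : ℕ, ((k.factorial:ℝ)) ≠ 0 :=
    fun k => Nat.cast_ne_zero.mpr (Nat.factorial_ne_zero k)
  have hpow : ∀ (j : ℕ) (t : ℝ), HasDerivAt (fun t : ℝ => (1-t:ℝ)^j)
      (-((j:ℝ) * (1-t)^(j-1))) t := by
    intro j t
    have h1 : HasDerivAt (fun t : ℝ => 1 - t) (-1) t := (hasDerivAt_id t).const_sub 1
    have := (hasDerivAt_pow j (1-t)).comp t h1
    simp at this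
    exact this
  have hGd : ∀ t, HasDerivAt G ((1-t)^q / (q.factorial:ℝ) * (ψ (q+1) t - ψ (q+1) 0)) t := by
    intro t
    have hterm : ∀ j ∈ Finset.range (q+1),
        HasDerivAt (fun t => (1-t)^j / (j.factorial:ℝ) * ψ j t) (b (j+1) t - b j t) t := by
      intro j hj
      have hjq : j < q + 1 := Finset.mem_range.mp hj
      have hd := (((hpow j t).div_const ((j.factorial:ℝ))).mul
        (rhotaPsi_hasDerivAt hf x v hjq t))
      refine hd.congr_deriv ?_
      simp only [hb, Nat.add_sub_cancel, Nat.factorial_succ]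
      push_cast
      field_simp
      ring
    have hsum := HasDerivAt.fun_sum hterm
    have hlast : HasDerivAt (fun t : ℝ => (1-t)^(q+1) / ((q+1).factorial:ℝ) * ψ (q+1) 0)
        (-(((q:ℝ)+1) * (1-t)^q) / ((q+1).factorial:ℝ) * ψ (q+1) 0) t := by
      have := ((hpow (q+1) t).div_const (((q+1).factorial:ℝ))).mul_const (ψ (q+1) 0)
      refine this.congr_deriv ?_
      simp only [Nat.add_sub_cancel]
      push_cast
      ring
    have htot := hsum.add hlast
    rw [Finset.sum_range_sub (fun j => b j t)] at htot
    refine htot.congr_deriv ?_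
    simp only [hb, Nat.add_sub_cancel, Nat.factorial_succ, Nat.cast_zero, zero_mul,
      Nat.factorial_zero, zero_div, zero_mul]
    push_cast
    field_simp
    ring
  have hBd : ∀ t, HasDerivAt B (c * ((1-t)^q * t)) t := by
    intro t
    have h1 := (((hpow (q+1) t).mul (hasDerivAt_id t)).neg).div_const ((q:ℝ)+1)
    have h2 := (hpow (q+2) t).div_const (((q:ℝ)+1)*((q:ℝ)+2))
    have h3 := (h1.sub h2).const_mul c
    refine h3.congr_deriv ?_
    simp only [Nat.add_sub_cancel, id_eq]
    have hq1 : ((q:ℝ)+1) ≠ 0 := by positivity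
    have hq2 : ((q:ℝ)+2) ≠ 0 := by positivity
    push_cast
    field_simp
    ring
  have hbound : ∀ t ∈ Set.Icc (0:ℝ) 1,
      |(1-t)^q / (q.factorial:ℝ) * (ψ (q+1) t - ψ (q+1) 0)| ≤ c * ((1-t)^q * t) := by
    intro t ht
    obtain ⟨ht0, ht1⟩ := ht
    have hdiff : |ψ (q+1) t - ψ (q+1) 0| ≤ L * t * ‖v‖^(q+2) := by
      have he : ψ (q+1) t - ψ (q+1) 0
          = (iteratedFDeriv ℝ (q+1) f (x + t • v)
            - iteratedFDeriv ℝ (q+1) f (x + (0:ℝ) • v)) (fun _ => v) := by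
        simp [hψ, rhotaPsi]
      rw [he]
      have h1 := (iteratedFDeriv ℝ (q+1) f (x + t • v)
          - iteratedFDeriv ℝ (q+1) f (x + (0:ℝ) • v)).le_opNorm (fun _ => v)
      have h2 : ‖iteratedFDeriv ℝ (q+1) f (x + t • v)
          - iteratedFDeriv ℝ (q+1) f (x + (0:ℝ) • v)‖ ≤ L * (t * ‖v‖) := by
        have := hlip (x + t • v) (x + (0:ℝ) • v)
        have he2 : (x + t • v) - (x + (0:ℝ) • v) = t • v := by
          simp
        rw [he2, norm_smul, Real.norm_eq_abs, abs_of_nonneg ht0] at this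
        exact this
      have h3 : (∏ _i : Fin (q+1), ‖v‖) = ‖v‖^(q+1) := by
        simp [Finset.prod_const]
      rw [Real.norm_eq_abs] at h1
      calc |(iteratedFDeriv ℝ (q+1) f (x + t • v)
            - iteratedFDeriv ℝ (q+1) f (x + (0:ℝ) • v)) (fun _ => v)|
          ≤ ‖iteratedFDeriv ℝ (q+1) f (x + t • v)
            - iteratedFDeriv ℝ (q+1) f (x + (0:ℝ) • v)‖ * ‖v‖^(q+1) := by
            rw [← h3]; exact h1
        _ ≤ (L * (t * ‖v‖)) * ‖v‖^(q+1) :=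
            mul_le_mul_of_nonneg_right h2 (pow_nonneg (norm_nonneg v) _)
        _ = L * t * ‖v‖^(q+2) := by ring
    have hco : (0:ℝ) ≤ (1-t)^q / (q.factorial:ℝ) :=
      div_nonneg (pow_nonneg (by linarith) q) (Nat.cast_nonneg _)
    rw [abs_mul, abs_of_nonneg hco]
    calc (1-t)^q / (q.factorial:ℝ) * |ψ (q+1) t - ψ (q+1) 0|
        ≤ (1-t)^q / (q.factorial:ℝ) * (L * t * ‖v‖^(q+2)) :=
          mul_le_mul_of_nonneg_left hdiff hco
      _ = c * ((1-t)^q * t) := by rw [hc]; ring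
  have key : |G 1 - G 0| ≤ B 1 - B 0 := by
    have k1 : (B 0 - G 0) ≤ (B 1 - G 1) :=
      rhota_mono_aux (fun t => (hBd t).sub (hGd t))
        (fun t ht => by have := abs_le.mp (hbound t ht); linarith [this.2])
    have k2 : (B 0 + G 0) ≤ (B 1 + G 1) :=
      rhota_mono_aux (fun t => (hBd t).add (hGd t))
        (fun t ht => by have := abs_le.mp (hbound t ht); linarith [this.1])
    rw [abs_le]
    constructor <;> linarith
  have hψ0 : ∀ j, ψ j 0 = iteratedFDeriv ℝ j f x (fun _ => v) := by
    intro j; simp [hψ, rhotaPsi]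
  have hG1 : G 1 = f y := by
    have h0 : ψ 0 1 = f y := by
      have h2 : x + v = y := by rw [hv]; abel
      simp [hψ, rhotaPsi, h2]
    simp only [hG, sub_self]
    rw [Finset.sum_eq_single 0 (fun j _ hj => by simp [zero_pow hj])
      (by intro hn; exact absurd (Finset.mem_range.mpr (Nat.succ_pos q)) hn)]
    simp [h0, zero_pow (Nat.succ_ne_zero q)]
  have hG0 : G 0 = ∑ j ∈ Finset.range (q+2),
      (1/(j.factorial:ℝ)) * iteratedFDeriv ℝ j f x (fun _ => v) := by
    rw [Finset.sum_range_succ]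
    simp [hG, hψ0, one_div]
  have hfac : ((q+2).factorial : ℝ) = ((q:ℝ)+2)*((q:ℝ)+1)*(q.factorial:ℝ) := by
    show (((q+1)+1).factorial : ℝ) = _
    rw [Nat.factorial_succ, Nat.factorial_succ]
    push_cast
    ring
  have hBval : B 1 - B 0 = L / ((q+2).factorial:ℝ) * ‖v‖^(q+2) := by
    have hq1 : ((q:ℝ)+1) ≠ 0 := by positivity
    have hq2 : ((q:ℝ)+2) ≠ 0 := by positivity
    simp only [hB, hc, sub_self, zero_pow (Nat.succ_ne_zero q), zero_pow (Nat.succ_ne_zero (q+1)),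
      sub_zero, one_pow, hfac]
    field_simp
    ring_nf
  rw [hG1, hG0, hBval] at key
  exact key

end RhotaAux

lemma rhota_eucl_norm_le {m : ℕ} (w z : EuclideanSpace ℝ (Fin m)) (c : ℝ) (hc : 0 ≤ c)
    (hb : ∀ i, |w i| ≤ z i * c) : ‖w‖ ≤ ‖z‖ * c := by
  have hz : ∀ i, ‖w i‖^2 ≤ (z i)^2 * c^2 := by
    intro i
    have h := hb i
    calc ‖w i‖^2 = |w i|^2 := by rw [Real.norm_eq_abs]
      _ ≤ (z i * c)^2 := pow_le_pow_left₀ (abs_nonneg _) h 2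
      _ = (z i)^2 * c^2 := by ring
  calc ‖w‖ = Real.sqrt (∑ i, ‖w i‖^2) := EuclideanSpace.norm_eq w
    _ ≤ Real.sqrt (∑ i, (z i)^2 * c^2) :=
        Real.sqrt_le_sqrt (Finset.sum_le_sum fun i _ => hz i)
    _ = Real.sqrt ((∑ i, (z i)^2) * c^2) := by rw [← Finset.sum_mul]
    _ = Real.sqrt (∑ i, (z i)^2) * c := by
        rw [Real.sqrt_mul (by positivity), Real.sqrt_sq hc]
    _ = ‖z‖ * c := by
        rw [EuclideanSpace.norm_eq]
        congr 2
        apply Finset.sum_congr rfl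
        intro i _
        rw [Real.norm_eq_abs, sq_abs]

lemma taylorMap_self (p : ℕ) {n m : ℕ} (F : Fin m → EuclideanSpace ℝ (Fin n) → ℝ)
    (x : EuclideanSpace ℝ (Fin n)) : taylorMap p F x x = euclMap F x := by
  unfold taylorMap euclMap
  congr 1
  funext i
  rw [Finset.sum_eq_single 0 (fun j _ hj => ?_) (fun hn => absurd
    (Finset.mem_range.mpr (Nat.succ_pos p)) hn)]
  · simp [iteratedFDeriv_zero_apply]
  · have : iteratedFDeriv ℝ j (F i) x (fun _ => x - x) = 0 :=
      ContinuousMultilinearMap.map_coord_zero _ (⟨0, Nat.pos_of_ne_zero hj⟩ : Fin j)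
        (by simp)
    rw [this, mul_zero]


/-- one-step descent of RHOTA, and monotonicity of `f(x_k)` along
any RHOTA sequence. -/
theorem stmt1 {n m : ℕ} (hn : 1 ≤ n) (hm : 1 ≤ m) (p : ℕ) (hp : 1 ≤ p)
    (F : Fin m → EuclideanSpace ℝ (Fin n) → ℝ)
    (Lp : EuclideanSpace ℝ (Fin m))
    (hFd : ∀ i, ContDiff ℝ p (F i))
    (hFlip : ∀ i (x y : EuclideanSpace ℝ (Fin n)),
      ‖iteratedFDeriv ℝ p (F i) x - iteratedFDeriv ℝ p (F i) y‖ ≤ Lp i * ‖x - y‖)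
    (g : EuclideanSpace ℝ (Fin m) → ℝ) (Lg : ℝ)
    (hgconv : ConvexOn ℝ Set.univ g)
    (hglip : ∀ a b : EuclideanSpace ℝ (Fin m), |g a - g b| ≤ Lg * ‖a - b‖)
    (C : Set (EuclideanSpace ℝ (Fin n))) (hCne : C.Nonempty) (hCcl : IsClosed C)
    (hCcv : Convex ℝ C)
    (h : EuclideanSpace ℝ (Fin n) → ℝ) (hhconv : ConvexOn ℝ Set.univ h)
    (hhlsc : LowerSemicontinuous h)
    (fstar : ℝ) (hlb : ∀ x ∈ C, fstar ≤ fObj F g h x)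
    (M : ℝ) (hM : Lg * ‖Lp‖ < M) :
    (∀ xb xp, xb ∈ C → xp ∈ C →
      sModel p F g h M xp xb ≤ sModel p F g h M xb xb →
      fObj F g h xp ≤ fObj F g h xb -
        (M - Lg * ‖Lp‖) / (Nat.factorial (p + 1) : ℝ) * ‖xp - xb‖ ^ (p + 1)) ∧
    (∀ x : ℕ → EuclideanSpace ℝ (Fin n), (∀ k, x k ∈ C) →
      (∀ k, sModel p F g h M (x (k + 1)) (x k) ≤ sModel p F g h M (x k) (x k)) →
      (∀ k, fObj F g h (x (k + 1)) ≤ fObj F g h (x k) -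
          (M - Lg * ‖Lp‖) / (Nat.factorial (p + 1) : ℝ) * ‖x (k + 1) - x k‖ ^ (p + 1)) ∧
        Antitone fun k => fObj F g h (x k)) := by
  obtain ⟨q, rfl⟩ : ∃ q, p = q + 1 := ⟨p - 1, (Nat.succ_pred_eq_of_pos hp).symm⟩
  have hrw : q + 1 + 1 = q + 2 := rfl
  have hfc0 : (0:ℝ) < ((q+2).factorial : ℝ) := by exact_mod_cast Nat.factorial_pos _
  have hLg0 : 0 ≤ Lg := by
    have h1 := hglip (EuclideanSpace.single (⟨0, hm⟩ : Fin m) (1:ℝ)) 0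
    rw [sub_zero, EuclideanSpace.norm_single, norm_one, mul_one] at h1
    exact le_trans (abs_nonneg _) h1
  have hkey : ∀ xb xp : EuclideanSpace ℝ (Fin n),
      ‖euclMap F xp - taylorMap (q+1) F xp xb‖
        ≤ ‖Lp‖ * (‖xp - xb‖^(q+2) / (((q+2).factorial):ℝ)) := by
    intro xb xp
    apply rhota_eucl_norm_le
    · positivity
    · intro i
      have hb := rhota_taylor_bound (f := F i) (L := Lp i) (q := q)
        (by exact_mod_cast hFd i) (fun a b => hFlip i a b) xb xp
      have he : (euclMap F xp - taylorMap (q+1) F xp xb) i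
          = F i xp - ∑ j ∈ Finset.range (q+2),
              (1/(j.factorial:ℝ)) * iteratedFDeriv ℝ j (F i) xb (fun _ => xp - xb) := rfl
      rw [he]
      calc |F i xp - ∑ j ∈ Finset.range (q+2),
              (1/(j.factorial:ℝ)) * iteratedFDeriv ℝ j (F i) xb (fun _ => xp - xb)|
          ≤ Lp i / ((q+2).factorial:ℝ) * ‖xp - xb‖^(q+2) := hb
        _ = Lp i * (‖xp - xb‖^(q+2) / (((q+2).factorial):ℝ)) := by ring
  have main : ∀ xb xp, sModel (q+1) F g h M xp xb ≤ sModel (q+1) F g h M xb xb →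
      fObj F g h xp ≤ fObj F g h xb -
        (M - Lg * ‖Lp‖) / (Nat.factorial (q+1+1) : ℝ) * ‖xp - xb‖ ^ (q+1+1) := by
    intro xb xp hs
    unfold sModel at hs
    unfold fObj
    simp only [hrw] at hs ⊢
    rw [taylorMap_self] at hs
    have hnn : ‖xb - xb‖ ^ (q+2) = (0:ℝ) := by
      simp [zero_pow (Nat.succ_ne_zero (q+1))]
    rw [hnn, mul_zero, add_zero] at hs
    set K := ‖xp - xb‖^(q+2) with hK
    have hK0 : (0:ℝ) ≤ K := by positivity
    have h2 : g (euclMap F xp) - g (taylorMap (q+1) F xp xb)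
        ≤ Lg * (‖Lp‖ * (K / ((q+2).factorial:ℝ))) :=
      le_trans (le_abs_self _) (le_trans (hglip _ _)
        (mul_le_mul_of_nonneg_left (hkey xb xp) hLg0))
    have e1 : Lg * (‖Lp‖ * (K / ((q+2).factorial:ℝ)))
        = Lg*‖Lp‖/((q+2).factorial:ℝ)*K := by ring
    have e2 : (M - Lg*‖Lp‖)/((q+2).factorial:ℝ)*K
        = M/((q+2).factorial:ℝ)*K - Lg*‖Lp‖/((q+2).factorial:ℝ)*K := by ring
    linarith
  refine ⟨fun xb xp _ _ hs => main xb xp hs, fun x hxC hxs => ?_⟩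
  have hdesc := fun k => main (x k) (x (k+1)) (hxs k)
  refine ⟨hdesc, antitone_nat_of_succ_le fun k => ?_⟩
  have h1 := hdesc k
  have h2 : 0 ≤ (M - Lg*‖Lp‖)/(Nat.factorial (q+1+1):ℝ) * ‖x (k+1) - x k‖^(q+1+1) := by
    have hle : (0:ℝ) < (Nat.factorial (q+1+1):ℝ) := by exact_mod_cast Nat.factorial_pos _
    exact mul_nonneg (div_nonneg (by linarith) hle.le) (by positivity)
  linarith


end
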